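/- Let G be a locally compact group, α an automorphism of G, and suppose α is contracting, meaning αⁿ(x) → 1 as n → ∞ uniformly for x in compact subsets of G. Suppose G is totally disconnected abelian (written additively as a module M over ℤ[α^{±1}]), and let Ω be a compact open subgroup of M with α(Ω) ⊆ Ω. Then for every v ∈ M: v ∈ Ω if and only if α(v) − v ∈ Ω. -/

import Mathlib

open Filter Topology

/-- let `M` be a totally disconnected locally compact abelian group,
`α` a contracting topological automorphism of `M` (iterates tend to `0` uniformly on
compact sets), and `Ω` a compact open subgroup with `α(Ω) ⊆ Ω`. Then for every `v`,
`v ∈ Ω` iff `α(v) − v ∈ Ω`. -/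
theorem stmt4 {M : Type*} [AddCommGroup M] [TopologicalSpace M] [IsTopologicalAddGroup M]
    [LocallyCompactSpace M] [TotallyDisconnectedSpace M]
    (α : M ≃+ M) (hc : Continuous α) (hc' : Continuous α.symm)
    (hcontr : ∀ K : Set M, IsCompact K → ∀ U ∈ 𝓝 (0 : M),
      ∀ᶠ n : ℕ in atTop, ∀ x ∈ K, (⇑α)^[n] x ∈ U)
    (Ω : AddSubgroup M) (hΩc : IsCompact (Ω : Set M)) (hΩo : IsOpen (Ω : Set M))
    (hinv : ∀ x ∈ Ω, α x ∈ Ω) (v : M) :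
    v ∈ Ω ↔ α v - v ∈ Ω := by
  constructor
  · intro hv
    exact Ω.sub_mem (hinv v hv) hv
  · intro h
    -- iterates preserve Ω
    have hiterΩ : ∀ n : ℕ, ∀ x ∈ Ω, (⇑α)^[n] x ∈ Ω := by
      intro n
      induction n with
      | zero => intro x hx; simpa using hx
      | succ n ih =>
        intro x hx
        rw [Function.iterate_succ_apply']
        exact hinv _ (ih x hx)
    -- telescoping: αⁿ v - v ∈ Ω
    have key : ∀ n : ℕ, (⇑α)^[n] v - v ∈ Ω := by
      intro n
      induction n with
      | zero => simpa using Ω.zero_mem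
      | succ n ih =>
        have h1 : (⇑α)^[n] (α v - v) ∈ Ω := hiterΩ n _ h
        have hsub : ∀ m : ℕ, ∀ a b : M, (⇑α)^[m] (a - b) = (⇑α)^[m] a - (⇑α)^[m] b := by
          intro m
          induction m with
          | zero => intro a b; simp
          | succ m ihm =>
            intro a b
            simp only [Function.iterate_succ_apply', ihm, map_sub]
        have h2 : (⇑α)^[n] (α v - v) = (⇑α)^[n+1] v - (⇑α)^[n] v := by
          rw [hsub, ← Function.iterate_succ_apply]
        have := Ω.add_mem (h2 ▸ h1) ih
        simpa using this
    -- αⁿ v → 0, so eventually in Ω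
    have hmem : ∀ᶠ n : ℕ in atTop, ∀ x ∈ ({v} : Set M), (⇑α)^[n] x ∈ (Ω : Set M) :=
      hcontr {v} isCompact_singleton _ (hΩo.mem_nhds Ω.zero_mem)
    obtain ⟨n, hn⟩ := hmem.exists
    have hαv : (⇑α)^[n] v ∈ Ω := hn v rfl
    have := Ω.sub_mem hαv (key n)
    simpa using this
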